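/- arXiv:1708.04929 — 2 statements merged into one kernel-verified Lean document; each statement's English description precedes it below -/
import Mathlib

section
/- Determinant lower bound via spectral data (Ipsen–Lee type bound): let S be symmetric positive definite, M a clique partition, and S^M the corresponding block-diagonal restriction (which is positive definite). Let ρ be the spectral radius and λ the smallest eigenvalue of (S^M)^{−1}(S − S^M). Then e^{−pρ²/(1+λ)} det(S^M) ≤ det(S) ≤ det(S^M), where p is the dimension. -/
open Matrix Polynomial

def cliqueRestrict {p : ℕ} (S : Matrix (Fin p) (Fin p) ℝ) (c : Fin p → ℕ) :
    Matrix (Fin p) (Fin p) ℝ :=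
  Matrix.of fun i j => if c i = c j then S i j else 0

section aux

lemma charpoly_conj_aux {n : Type*} [Fintype n] [DecidableEq n] {K : Type*} [Field K]
    (P Q M : Matrix n n K) (h1 : P * Q = 1) (h2 : Q * P = 1) :
    (P * M * Q).charpoly = M.charpoly := by
  clear h2
  have hmap : P.map C * Q.map C = (1 : Matrix n n K[X]) := by
    have := congrArg (fun (A : Matrix n n K) => A.map (C : K →+* K[X])) h1
    simpa [Matrix.map_mul] using this
  have hcm : charmatrix (P * M * Q) = P.map C * charmatrix M * Q.map C := by
    rw [charmatrix, charmatrix]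
    have hscal : P.map C * Matrix.scalar n (X : K[X]) * Q.map C = Matrix.scalar n (X : K[X]) := by
      rw [(Matrix.scalar_commute (X : K[X]) (Commute.all _) (P.map C)).symm.eq]
      rw [mul_assoc, hmap, mul_one]
    rw [mul_sub, sub_mul, hscal]
    congr 1
    simp [RingHom.mapMatrix_apply, Matrix.map_mul]
  rw [Matrix.charpoly, Matrix.charpoly, hcm, det_mul, det_mul]
  have hdet : (P.map (C : K →+* K[X])).det * (Q.map C).det = 1 := by
    rw [← det_mul, hmap, det_one]
  calc (P.map (C : K →+* K[X])).det * M.charmatrix.det * (Q.map C).det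
      = (P.map (C : K →+* K[X])).det * (Q.map C).det * M.charmatrix.det := by ring
    _ = M.charmatrix.det := by rw [hdet, one_mul]

lemma charpoly_diagonal' {n : Type*} [Fintype n] [DecidableEq n] {K : Type*} [Field K]
    (d : n → K) : (Matrix.diagonal d).charpoly = ∏ i, (X - C (d i)) := by
  rw [Matrix.charpoly]
  have : charmatrix (Matrix.diagonal d) = Matrix.diagonal (fun i => X - C (d i)) := by
    ext i j
    by_cases h : i = j
    · subst h; simp
    · simp [charmatrix_apply_ne _ _ _ h, Matrix.diagonal_apply_ne _ h]
  rw [this, det_diagonal]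

lemma charpoly_hermitian_real {n : Type*} [Fintype n] [DecidableEq n]
    {A : Matrix n n ℝ} (hA : A.IsHermitian) :
    A.charpoly = ∏ i, (X - C (hA.eigenvalues i)) := by
  have hst := hA.spectral_theorem
  set V : Matrix n n ℝ := (hA.eigenvectorUnitary : Matrix n n ℝ)
  have h1 : V * star V = 1 := (Matrix.mem_unitaryGroup_iff).mp hA.eigenvectorUnitary.2
  have h2 : star V * V = 1 := (Matrix.mem_unitaryGroup_iff').mp hA.eigenvectorUnitary.2
  have : A.charpoly = (Matrix.diagonal (RCLike.ofReal ∘ hA.eigenvalues)).charpoly := by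
    conv_lhs => rw [hst]
    exact charpoly_conj_aux V (star V) _ h1 h2
  rw [this]
  have : (RCLike.ofReal ∘ hA.eigenvalues : n → ℝ) = hA.eigenvalues := by
    funext i; simp [RCLike.ofReal]
  rw [this, charpoly_diagonal']

lemma cliqueRestrict_posDef {p : ℕ} {S : Matrix (Fin p) (Fin p) ℝ}
    (hSpd : S.PosDef) (c : Fin p → ℕ) : (cliqueRestrict S c).PosDef := by
  refine Matrix.PosDef.of_dotProduct_mulVec_pos ?_ ?_
  · show (cliqueRestrict S c)ᴴ = cliqueRestrict S c
    ext i j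
    have hs : S j i = S i j := by
      have := congrFun (congrFun hSpd.1 i) j
      simpa [Matrix.conjTranspose_apply] using this
    simp [cliqueRestrict, Matrix.conjTranspose_apply, hs, eq_comm]
  · intro x hx
    set im := Finset.image c Finset.univ with him
    set y : ℕ → (Fin p → ℝ) := fun k i => if c i = k then x i else 0 with hy
    have key : dotProduct (star x) (cliqueRestrict S c *ᵥ x)
        = ∑ k ∈ im, dotProduct (star (y k)) (S *ᵥ (y k)) := by
      have hR : ∀ k, dotProduct (star (y k)) (S *ᵥ (y k))
          = ∑ i, ∑ j, (y k i) * (S i j * y k j) := by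
        intro k
        simp [dotProduct, mulVec, Finset.mul_sum]
      have hL : dotProduct (star x) (cliqueRestrict S c *ᵥ x)
          = ∑ i, ∑ j, (if c i = c j then x i * (S i j * x j) else 0) := by
        simp only [dotProduct, mulVec, star, Finset.mul_sum, cliqueRestrict, Matrix.of_apply, id]
        refine Finset.sum_congr rfl fun i _ => Finset.sum_congr rfl fun j _ => ?_
        by_cases h : c i = c j <;> simp [h, mul_assoc]
      rw [hL]
      have step : ∑ k ∈ im, dotProduct (star (y k)) (S *ᵥ (y k))
          = ∑ i, ∑ j, ∑ k ∈ im, (y k i) * (S i j * y k j) := by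
        calc ∑ k ∈ im, dotProduct (star (y k)) (S *ᵥ (y k))
            = ∑ k ∈ im, ∑ i, ∑ j, (y k i) * (S i j * y k j) :=
              Finset.sum_congr rfl (fun k _ => hR k)
          _ = ∑ i, ∑ k ∈ im, ∑ j, (y k i) * (S i j * y k j) := Finset.sum_comm
          _ = ∑ i, ∑ j, ∑ k ∈ im, (y k i) * (S i j * y k j) :=
              Finset.sum_congr rfl (fun i _ => Finset.sum_comm)
      rw [step]
      refine Finset.sum_congr rfl fun i _ => Finset.sum_congr rfl fun j _ => ?_
      rw [eq_comm]
      rw [Finset.sum_eq_single (c i)]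
      · simp only [hy]
        by_cases h : c i = c j <;> simp [h, eq_comm]
      · intro b _ hb
        simp only [hy]
        simp [Ne.symm hb]
      · intro habs; exact absurd (Finset.mem_image_of_mem c (Finset.mem_univ i)) habs
    rw [key]
    obtain ⟨i0, hi0⟩ : ∃ i, x i ≠ 0 := Function.ne_iff.mp hx
    apply Finset.sum_pos'
    · intro k _
      exact hSpd.posSemidef.dotProduct_mulVec_nonneg (y k)
    · refine ⟨c i0, Finset.mem_image_of_mem c (Finset.mem_univ i0), ?_⟩
      apply hSpd.dotProduct_mulVec_pos
      intro habs
      apply hi0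
      have := congrFun habs i0
      simpa [hy] using this

lemma inv_block {p : ℕ} {S : Matrix (Fin p) (Fin p) ℝ} {c : Fin p → ℕ}
    (hB : IsUnit (cliqueRestrict S c).det) {i j : Fin p} (hij : c i ≠ c j) :
    (cliqueRestrict S c)⁻¹ i j = 0 := by
  set B := cliqueRestrict S c with hBdef
  set G : Matrix (Fin p) (Fin p) ℝ := Matrix.diagonal (fun l => if c l = c i then 2 else 1) with hG
  have hcomm : B * G = G * B := by
    ext a b
    rw [Matrix.mul_diagonal, Matrix.diagonal_mul]
    by_cases h : c a = c b
    · simp only [hBdef, cliqueRestrict, Matrix.of_apply]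
      rw [if_pos h, h]
      ring
    · simp [hBdef, cliqueRestrict, h]
  have hinv : B⁻¹ * G = G * B⁻¹ := by
    have h1 : B * B⁻¹ = 1 := Matrix.mul_nonsing_inv B hB
    have h2 : B⁻¹ * B = 1 := Matrix.nonsing_inv_mul B hB
    calc B⁻¹ * G = B⁻¹ * G * (B * B⁻¹) := by rw [h1, mul_one]
      _ = B⁻¹ * (G * B) * B⁻¹ := by simp only [mul_assoc]
      _ = B⁻¹ * (B * G) * B⁻¹ := by rw [hcomm]
      _ = G * B⁻¹ := by rw [← mul_assoc, h2, one_mul]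
  have := congrFun (congrFun hinv i) j
  rw [Matrix.mul_diagonal, Matrix.diagonal_mul] at this
  rw [if_neg (fun hh : c j = c i => hij hh.symm), if_pos rfl, mul_one] at this
  linarith

lemma charpoly_eval' {n : Type*} [Fintype n] [DecidableEq n] {K : Type*} [CommRing K]
    (M : Matrix n n K) (r : K) :
    M.charpoly.eval r = (Matrix.scalar n r - M).det := by
  rw [Matrix.charpoly, eval_det, matPolyEquiv_charmatrix]
  congr 1
  rw [eval_sub, eval_X, eval_C]

-- key scalar inequality: for -1 < lam ≤ x, exp (x - x^2/(1+lam)) ≤ 1 + x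
lemma scalar_ineq {lam x : ℝ} (hlam : 0 < 1 + lam) (hx : lam ≤ x) :
    Real.exp (x - x ^ 2 / (1 + lam)) ≤ 1 + x := by
  have hx1 : 0 < 1 + x := by linarith
  have h1 : x - x ^ 2 / (1 + lam) ≤ x / (1 + x) := by
    have hxx : x / (1 + x) = x - x ^ 2 / (1 + x) := by
      field_simp
      ring
    rw [hxx]
    have : x ^ 2 / (1 + x) ≤ x ^ 2 / (1 + lam) :=
      div_le_div_of_nonneg_left (sq_nonneg x) hlam (by linarith)
    linarith
  refine (Real.exp_le_exp.mpr h1).trans ?_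
  set t := x / (1 + x) with ht
  have h1t : 1 - t = 1 / (1 + x) := by
    rw [ht]
    field_simp
    ring
  have h1tpos : 0 < 1 - t := by rw [h1t]; positivity
  have hexp : 1 - t ≤ Real.exp (-t) := by
    have := Real.add_one_le_exp (-t)
    linarith
  have : Real.exp t ≤ 1 / (1 - t) := by
    have hpos : 0 < Real.exp (-t) := Real.exp_pos _
    have h2 : 1 / Real.exp (-t) ≤ 1 / (1 - t) := one_div_le_one_div_of_le h1tpos hexp
    calc Real.exp t = 1 / Real.exp (-t) := by
          rw [Real.exp_neg]; field_simp
      _ ≤ 1 / (1 - t) := h2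
  rw [h1t] at this
  calc Real.exp t ≤ 1 / (1 / (1 + x)) := this
    _ = 1 + x := by field_simp

open scoped MatrixOrder in
lemma exists_sqrt_aux {p : ℕ} {B : Matrix (Fin p) (Fin p) ℝ} (hB : B.PosSemidef) :
    ∃ R : Matrix (Fin p) (Fin p) ℝ, R * R = B ∧ R.IsHermitian :=
  ⟨CFC.sqrt B, CFC.sqrt_mul_sqrt_self B (nonneg_iff_posSemidef.mpr hB),
    (nonneg_iff_posSemidef.mp (CFC.sqrt_nonneg B)).1⟩

end aux

/-- Ipsen–Lee type determinant bound: with `ρ` the spectral radius and `lam` the smallest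
eigenvalue of `E = (S^M)⁻¹ (S - S^M)`,
`e^{-pρ²/(1+lam)} det(S^M) ≤ det S ≤ det(S^M)`. -/
theorem det_spectral_sandwich {p : ℕ} (S : Matrix (Fin p) (Fin p) ℝ)
    (hS : S.IsSymm) (hSpd : S.PosDef) (c : Fin p → ℕ)
    (E : Matrix (Fin p) (Fin p) ℝ)
    (hE : E = (cliqueRestrict S c)⁻¹ * (S - cliqueRestrict S c))
    (ρ lam : ℝ)
    (hρub : ∀ μ ∈ E.charpoly.aroots ℂ, ‖μ‖ ≤ ρ)
    (hρmem : ∃ μ ∈ E.charpoly.aroots ℂ, ‖μ‖ = ρ)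
    (hlammem : lam ∈ E.charpoly.roots)
    (hlamlb : ∀ μ ∈ E.charpoly.roots, lam ≤ μ)
    (hlam : 0 < 1 + lam) :
    Real.exp (-(p : ℝ) * ρ ^ 2 / (1 + lam)) * (cliqueRestrict S c).det ≤ S.det ∧
      S.det ≤ (cliqueRestrict S c).det := by
  clear hρmem hlammem
  set B := cliqueRestrict S c with hBdef
  have hBpd : B.PosDef := cliqueRestrict_posDef hSpd c
  have hBdet : 0 < B.det := hBpd.det_pos
  have hBunit : IsUnit B.det := hBdet.ne'.isUnit
  -- square root
  obtain ⟨R, hRR, hRH⟩ := exists_sqrt_aux hBpd.posSemidef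
  have hRunit : IsUnit R.det := by
    have : R.det * R.det = B.det := by rw [← det_mul, hRR]
    refine isUnit_iff_ne_zero.mpr fun h => ?_
    rw [h, mul_zero] at this
    exact hBdet.ne this
  have hR1 : R * R⁻¹ = 1 := Matrix.mul_nonsing_inv R hRunit
  have hR2 : R⁻¹ * R = 1 := Matrix.nonsing_inv_mul R hRunit
  set A : Matrix (Fin p) (Fin p) ℝ := R⁻¹ * (S - B) * R⁻¹ with hAdef
  have hDH : (S - B)ᴴ = S - B := by
    have h1 : Sᴴ = S := by
      ext i j
      rw [Matrix.conjTranspose_apply, star_trivial]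
      exact congrFun (congrFun hS i) j
    have h2 : Bᴴ = B := hBpd.1
    rw [Matrix.conjTranspose_sub, h1, h2]
  have hRiH : (R⁻¹)ᴴ = R⁻¹ := (hRH.inv : (R⁻¹).IsHermitian)
  have hAH : A.IsHermitian := by
    show Aᴴ = A
    rw [hAdef, Matrix.conjTranspose_mul, Matrix.conjTranspose_mul, hDH, hRiH]
    simp [mul_assoc]
  -- E is conjugate to A
  have hBinv : B⁻¹ = R⁻¹ * R⁻¹ := by
    rw [← hRR, Matrix.mul_inv_rev]
  have hEA : E = R⁻¹ * A * R := by
    rw [hE, hBinv, hAdef]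
    calc R⁻¹ * R⁻¹ * (S - B) = R⁻¹ * (R⁻¹ * (S - B)) * (R⁻¹ * R) := by
          rw [hR2, mul_one]; simp [mul_assoc]
      _ = R⁻¹ * (R⁻¹ * (S - B) * R⁻¹) * R := by simp only [mul_assoc]
  have hchar : E.charpoly = A.charpoly := by
    rw [hEA]; exact charpoly_conj_aux _ _ _ hR2 hR1
  set eig := hAH.eigenvalues with heig
  have hcp : E.charpoly = ∏ i, (X - C (eig i)) := by
    rw [hchar]; exact charpoly_hermitian_real hAH
  have hmultiset : (∏ i, (X - C (eig i))) =
      ((Finset.univ.val.map eig).map (fun r : ℝ => X - C r)).prod := by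
    rw [Multiset.map_map]
    rfl
  have hroots : E.charpoly.roots = Finset.univ.val.map eig := by
    rw [hcp, hmultiset, Polynomial.roots_multiset_prod_X_sub_C]
  have hsplits : E.charpoly.Splits := by
    rw [hcp]
    exact Polynomial.Splits.prod fun i _ => Polynomial.Splits.X_sub_C _
  -- bounds on eigenvalues
  have hlam_le : ∀ i, lam ≤ eig i := by
    intro i
    apply hlamlb
    rw [hroots]
    exact Multiset.mem_map_of_mem eig (by simp)
  have hpos1 : ∀ i, 0 < 1 + eig i := fun i => lt_of_lt_of_le hlam (by linarith [hlam_le i])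
  have haroots : E.charpoly.aroots ℂ = Finset.univ.val.map (fun i => (eig i : ℂ)) := by
    rw [Polynomial.aroots_def, hcp]
    have : Polynomial.map (algebraMap ℝ ℂ) (∏ i, (X - C (eig i)))
        = ∏ i : Fin p, (X - C ((eig i : ℂ))) := by
      rw [Polynomial.map_prod]
      refine Finset.prod_congr rfl fun i _ => ?_
      rw [Polynomial.map_sub, Polynomial.map_X, Polynomial.map_C]
      rfl
    rw [this]
    rw [show (∏ i : Fin p, (X - C ((eig i : ℂ)))) =
      ((Finset.univ.val.map (fun i => (eig i : ℂ))).map (fun r : ℂ => X - C r)).prod by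
        rw [Multiset.map_map]; rfl]
    rw [Polynomial.roots_multiset_prod_X_sub_C]
  have hrho : ∀ i, |eig i| ≤ ρ := by
    intro i
    have := hρub (eig i) (by rw [haroots]; exact Multiset.mem_map_of_mem _ (by simp))
    rwa [Complex.norm_real, Real.norm_eq_abs] at this
  have hrho2 : ∀ i, eig i ^ 2 ≤ ρ ^ 2 := fun i =>
    sq_le_sq' (by linarith [(abs_le.mp (hrho i)).1]) (abs_le.mp (hrho i)).2
  -- trace zero
  have htr : E.trace = 0 := by
    rw [hE, Matrix.trace]
    apply Finset.sum_eq_zero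
    intro i _
    rw [Matrix.diag_apply, Matrix.mul_apply]
    apply Finset.sum_eq_zero
    intro j _
    by_cases h : c i = c j
    · have : (S - B) j i = 0 := by
        simp [hBdef, cliqueRestrict, h.symm]
      rw [this, mul_zero]
    · rw [inv_block hBunit h, zero_mul]
  have hsum : ∑ i, eig i = 0 := by
    have := trace_eq_sum_roots_charpoly_of_splits hsplits
    rw [htr, hroots, ← Finset.sum_eq_multiset_sum] at this
    exact this.symm
  -- determinant identities
  have hSfact : S = B * (1 + E) := by
    rw [hE, mul_add, mul_one, ← mul_assoc, Matrix.mul_nonsing_inv B hBunit, one_mul,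
      add_sub_cancel]
  have hdet1E : (1 + E).det = ∏ i, (1 + eig i) := by
    have heval : E.charpoly.eval (-1) = (Matrix.scalar (Fin p) (-1) - E).det :=
      charpoly_eval' E (-1)
    have hscal : Matrix.scalar (Fin p) (-1 : ℝ) - E = -(1 + E) := by
      have : Matrix.scalar (Fin p) (-1 : ℝ) = -(1 : Matrix (Fin p) (Fin p) ℝ) := by
        rw [map_neg, _root_.map_one]
      rw [this]
      abel
    have heval2 : E.charpoly.eval (-1) = (-1 : ℝ) ^ p * ∏ i, (1 + eig i) := by
      rw [hcp, Polynomial.eval_prod]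
      have : ∀ i : Fin p, ((X : ℝ[X]) - C (eig i)).eval (-1) = (-1) * (1 + eig i) := by
        intro i
        rw [Polynomial.eval_sub, Polynomial.eval_X, Polynomial.eval_C]
        ring
      rw [Finset.prod_congr rfl fun i _ => this i, Finset.prod_mul_distrib,
        Finset.prod_const, Finset.card_univ, Fintype.card_fin]
    have hdetneg : (-(1 + E)).det = (-1 : ℝ) ^ p * (1 + E).det := by
      rw [Matrix.det_neg, Fintype.card_fin]
    have : (-1 : ℝ) ^ p * (1 + E).det = (-1 : ℝ) ^ p * ∏ i, (1 + eig i) := by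
      rw [← hdetneg, ← hscal, ← heval, heval2]
    exact mul_left_cancel₀ (pow_ne_zero p (by norm_num : (-1 : ℝ) ≠ 0)) this
  have hdetS : S.det = B.det * ∏ i, (1 + eig i) := by
    rw [hSfact, det_mul, hdet1E]
  have hup : ∏ i, (1 + eig i) ≤ 1 := by
    calc ∏ i, (1 + eig i) ≤ ∏ i, Real.exp (eig i) :=
          Finset.prod_le_prod (fun i _ => (hpos1 i).le)
            (fun i _ => by linarith [Real.add_one_le_exp (eig i)])
      _ = Real.exp (∑ i, eig i) := (Real.exp_sum _ _).symm
      _ = 1 := by rw [hsum, Real.exp_zero]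
  have hlow : Real.exp (-(p : ℝ) * ρ ^ 2 / (1 + lam)) ≤ ∏ i, (1 + eig i) := by
    calc Real.exp (-(p : ℝ) * ρ ^ 2 / (1 + lam))
        ≤ Real.exp (∑ i, (eig i - eig i ^ 2 / (1 + lam))) := by
          apply Real.exp_le_exp.mpr
          have h1 : ∑ i, (eig i - eig i ^ 2 / (1 + lam))
              = (-(∑ i, eig i ^ 2)) / (1 + lam) := by
            rw [Finset.sum_sub_distrib, hsum, ← Finset.sum_div]
            ring
          rw [h1]
          have h2 : ∑ i, eig i ^ 2 ≤ (p : ℝ) * ρ ^ 2 := by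
            calc ∑ i, eig i ^ 2 ≤ ∑ _i : Fin p, ρ ^ 2 :=
                  Finset.sum_le_sum fun i _ => hrho2 i
              _ = (p : ℝ) * ρ ^ 2 := by
                  rw [Finset.sum_const, Finset.card_univ, Fintype.card_fin, nsmul_eq_mul]
          rw [div_le_div_iff_of_pos_right hlam]
          linarith
      _ = ∏ i, Real.exp (eig i - eig i ^ 2 / (1 + lam)) := Real.exp_sum _ _
      _ ≤ ∏ i, (1 + eig i) :=
          Finset.prod_le_prod (fun i _ => (Real.exp_pos _).le)
            (fun i _ => scalar_ineq hlam (hlam_le i))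
  constructor
  · calc Real.exp (-(p : ℝ) * ρ ^ 2 / (1 + lam)) * B.det
        ≤ (∏ i, (1 + eig i)) * B.det := mul_le_mul_of_nonneg_right hlow hBdet.le
      _ = B.det * ∏ i, (1 + eig i) := mul_comm _ _
      _ = S.det := hdetS.symm
  · rw [hdetS]
    exact mul_le_of_le_one_right hBdet.le hup
end

section
/- Change of variables Jacobian: the map A ↦ Z = A^{−1}B on invertible p×p matrices, for a fixed invertible matrix B, has Lebesgue-measure Jacobian |det Z|^{−2p}|det B|^{p}; i.e. for any nonnegative measurable f, ∫ f(A^{−1}B) dA = ∫ f(Z) |det Z|^{−2p} |det B|^{p} dZ. -/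
open MeasureTheory Matrix

attribute [local instance] Matrix.linftyOpNormedRing Matrix.linftyOpNormedAlgebra
  Matrix.linftyOpNormedAddCommGroup Matrix.linftyOpNormedSpace

private lemma det_mulLeft_comp_mulRight' {p : ℕ} (C D : Matrix (Fin p) (Fin p) ℝ) :
    LinearMap.det ((LinearMap.mulLeft ℝ C).comp (LinearMap.mulRight ℝ D)) =
      C.det ^ p * D.det ^ p := by
  classical
  have h : (LinearMap.mulLeft ℝ C).comp (LinearMap.mulRight ℝ D) =
      Matrix.toLin (Matrix.stdBasis ℝ (Fin p) (Fin p)) (Matrix.stdBasis ℝ (Fin p) (Fin p))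
        (Matrix.kroneckerMap (· * ·) C Dᵀ) := by
    apply (Matrix.stdBasis ℝ (Fin p) (Fin p)).ext
    rintro ⟨k, l⟩
    rw [Matrix.toLin_self]
    ext i j
    simp [Matrix.stdBasis_eq_single, Matrix.mul_apply, Matrix.single,
      Fintype.sum_prod_type, Finset.sum_apply, ite_mul, mul_ite, Finset.sum_ite_eq,
      Finset.sum_ite_eq', ite_and, Matrix.sum_apply, mul_comm, Matrix.of_apply,
      Pi.smul_apply, smul_eq_mul]
  rw [h, LinearMap.det_toLin, Matrix.det_kronecker, Matrix.det_transpose, Fintype.card_fin]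

private lemma eval_det_add_smul_one' {p : ℕ} (A : Matrix (Fin p) (Fin p) ℝ) (t : ℝ) :
    ((-A).charpoly).eval t = (A + t • 1).det := by
  rw [Matrix.charpoly, ← Polynomial.coe_evalRingHom, RingHom.map_det]
  congr 1
  ext i j
  by_cases h : i = j
  · subst h
    simp [Matrix.charmatrix_apply_eq, Matrix.smul_apply, Matrix.one_apply, add_comm]
  · simp [Matrix.charmatrix_apply_ne _ _ _ h, Matrix.one_apply, h]

private lemma finite_slice' {p : ℕ} (A : Matrix (Fin p) (Fin p) ℝ) :
    {t : ℝ | (A + t • 1).det = 0}.Finite := by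
  have h : {t : ℝ | (A + t • 1).det = 0} = {t : ℝ | ((-A).charpoly).IsRoot t} := by
    ext t
    simp [Polynomial.IsRoot, eval_det_add_smul_one']
  rw [h]
  exact Polynomial.finite_setOf_isRoot ((-A).charpoly_monic.ne_zero)

private lemma null_det_zero' {p : ℕ} :
    volume {x : Fin p → Fin p → ℝ | (Matrix.of x).det = 0} = 0 := by
  set S := {x : Fin p → Fin p → ℝ | (Matrix.of x).det = 0} with hS
  have hcont : Continuous fun x : Fin p → Fin p → ℝ => (Matrix.of x).det :=
    Continuous.matrix_det continuous_id
  have hSm : MeasurableSet S := hcont.measurable (measurableSet_singleton 0)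
  have hcont2 : Continuous fun tx : ℝ × (Fin p → Fin p → ℝ) =>
      (Matrix.of tx.2 + tx.1 • 1).det := by
    apply Continuous.matrix_det
    exact (continuous_snd.add (continuous_fst.smul continuous_const))
  set T : Set (ℝ × (Fin p → Fin p → ℝ)) := {tx | (Matrix.of tx.2 + tx.1 • 1).det = 0} with hT
  have hTm : MeasurableSet T := hcont2.measurable (measurableSet_singleton 0)
  have h1 : (volume.prod volume) T = volume S * ⊤ := by
    rw [Measure.prod_apply hTm]
    have h2 : ∀ t : ℝ, volume (Prod.mk t ⁻¹' T) = volume S := by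
      intro t
      have h3 : Prod.mk t ⁻¹' T = (fun x => (Matrix.of.symm ((t : ℝ) • 1)) + x) ⁻¹' S := by
        ext x
        simp only [Set.mem_preimage, hT, Set.mem_setOf_eq, hS]
        constructor
        · intro h; convert h using 2; ext i j; simp [add_comm]
        · intro h; convert h using 2; ext i j; simp [add_comm]
      rw [h3, measure_preimage_add]
    simp only [h2, lintegral_const, Real.volume_univ]
  have h2 : (volume.prod volume) T = 0 := by
    rw [Measure.prod_apply_symm hTm]
    have h4 : ∀ x : Fin p → Fin p → ℝ, volume ((fun t => (t, x)) ⁻¹' T) = 0 := by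
      intro x
      have hfin : ((fun t : ℝ => (t, x)) ⁻¹' T).Finite :=
        Set.Finite.subset (finite_slice' (Matrix.of x)) (fun t ht => ht)
      exact hfin.countable.measure_zero _
    simp only [h4, lintegral_zero]
  rw [h2] at h1
  rcases mul_eq_zero.mp h1.symm with h | h
  · exact h
  · exact absurd h ENNReal.top_ne_zero

private lemma hasFDerivAt_const_mul_inv' {p : ℕ} (B Z : Matrix (Fin p) (Fin p) ℝ)
    (hZ : IsUnit Z.det) :
    HasFDerivAt (fun X : Matrix (Fin p) (Fin p) ℝ => B * X⁻¹)
      (LinearMap.toContinuousLinearMap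
        ((LinearMap.mulLeft ℝ (-(B * Z⁻¹))).comp (LinearMap.mulRight ℝ Z⁻¹))) Z := by
  have hU : IsUnit Z := (Matrix.isUnit_iff_isUnit_det Z).mpr hZ
  have h0 : HasFDerivAt (Ring.inverse : Matrix (Fin p) (Fin p) ℝ → _)
      (-(ContinuousLinearMap.mulLeftRight ℝ _ (↑hU.unit⁻¹) (↑hU.unit⁻¹))) Z := by
    have := hasFDerivAt_ringInverse (𝕜 := ℝ) hU.unit
    rwa [hU.unit_spec] at this
  have hinv : ((hU.unit⁻¹ : _) : Matrix (Fin p) (Fin p) ℝ) = Z⁻¹ := by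
    rw [Matrix.nonsing_inv_eq_ringInverse]
    conv_rhs => rw [← hU.unit_spec]
    rw [Ring.inverse_unit]
  simp only [hinv] at h0
  have h1 := h0.const_mul B
  have heq : (fun X : Matrix (Fin p) (Fin p) ℝ => B * Ring.inverse X) =
      fun X : Matrix (Fin p) (Fin p) ℝ => B * X⁻¹ := by
    funext X; rw [Matrix.nonsing_inv_eq_ringInverse]
  rw [heq] at h1
  refine h1.congr_fderiv ?_
  ext X
  change _ = (-(B * Z⁻¹) * (X * Z⁻¹)) _ _
  simp [ContinuousLinearMap.mulLeftRight_apply, mul_assoc, LinearMap.coe_toContinuousLinearMap',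
    LinearMap.mulLeft_apply, LinearMap.mulRight_apply, Matrix.neg_mul]

/-- Change of variables: the map `A ↦ A⁻¹ B` has Jacobian `|det Z|^{-2p} |det B|^p`
with respect to Lebesgue measure on `p × p` matrices. -/
theorem matrix_inverse_change_of_variables {p : ℕ}
    (B : Matrix (Fin p) (Fin p) ℝ) (hB : IsUnit B.det)
    (f : Matrix (Fin p) (Fin p) ℝ → ENNReal)
    (hf : Measurable fun z : Fin p → Fin p → ℝ => f (Matrix.of z)) :
    (∫⁻ a : Fin p → Fin p → ℝ, f ((Matrix.of a)⁻¹ * B) ∂volume) =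
      ∫⁻ z : Fin p → Fin p → ℝ,
        f (Matrix.of z) *
          ENNReal.ofReal (|(Matrix.of z).det| ^ (-(2 * p : ℝ)) * |B.det| ^ (p : ℕ))
        ∂volume := by
  classical
  set le : (Fin p → Fin p → ℝ) ≃ₗ[ℝ] Matrix (Fin p) (Fin p) ℝ := Matrix.ofLinearEquiv ℝ with hle
  set φ : (Fin p → Fin p → ℝ) ≃L[ℝ] Matrix (Fin p) (Fin p) ℝ := le.toContinuousLinearEquiv with hφ
  set s : Set (Fin p → Fin p → ℝ) := {x | (Matrix.of x).det ≠ 0} with hs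
  have hφ_apply : ∀ x, φ x = Matrix.of x := fun _ => rfl
  have hφsymm_apply : ∀ X, φ.symm X = Matrix.of.symm X := fun _ => rfl
  -- the change of variables map
  set g : (Fin p → Fin p → ℝ) → (Fin p → Fin p → ℝ) :=
    fun x => φ.symm (B * (Matrix.of x)⁻¹) with hg
  set g' : (Fin p → Fin p → ℝ) → ((Fin p → Fin p → ℝ) →L[ℝ] (Fin p → Fin p → ℝ)) :=
    fun z => ((φ.symm : Matrix (Fin p) (Fin p) ℝ →L[ℝ] (Fin p → Fin p → ℝ)).comp
      ((LinearMap.toContinuousLinearMap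
        ((LinearMap.mulLeft ℝ (-(B * (Matrix.of z)⁻¹))).comp
          (LinearMap.mulRight ℝ (Matrix.of z)⁻¹))).comp
        (φ : (Fin p → Fin p → ℝ) →L[ℝ] Matrix (Fin p) (Fin p) ℝ))) with hg'
  have hs_open : IsOpen s := by
    have : Continuous fun x : Fin p → Fin p → ℝ => (Matrix.of x).det :=
      Continuous.matrix_det continuous_id
    exact IsOpen.preimage this isOpen_ne
  have hs_meas : MeasurableSet s := hs_open.measurableSet
  have hs_compl : volume sᶜ = 0 := by
    have : sᶜ = {x : Fin p → Fin p → ℝ | (Matrix.of x).det = 0} := by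
      ext x; simp [hs]
    rw [this]; exact null_det_zero'
  have hs_ae : s =ᵐ[(volume : Measure (Fin p → Fin p → ℝ))] Set.univ :=
    (MeasureTheory.ae_eq_univ).mpr hs_compl
  -- derivative
  have hg'def : ∀ z ∈ s, HasFDerivAt g (g' z) z := by
    intro z hz
    have hzdet : IsUnit (Matrix.of z).det := isUnit_iff_ne_zero.mpr hz
    have h0 := hasFDerivAt_const_mul_inv' B (Matrix.of z) hzdet
    have h1 : HasFDerivAt ((fun X : Matrix (Fin p) (Fin p) ℝ => B * X⁻¹) ∘ φ)
        ((LinearMap.toContinuousLinearMap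
          ((LinearMap.mulLeft ℝ (-(B * (Matrix.of z)⁻¹))).comp
            (LinearMap.mulRight ℝ (Matrix.of z)⁻¹))).comp
          (φ : (Fin p → Fin p → ℝ) →L[ℝ] Matrix (Fin p) (Fin p) ℝ)) z :=
      HasFDerivAt.comp z h0 (φ.hasFDerivAt)
    exact (φ.symm.hasFDerivAt).comp z h1
  have hg'within : ∀ z ∈ s, HasFDerivWithinAt g (g' z) s z :=
    fun z hz => (hg'def z hz).hasFDerivWithinAt
  -- injectivity
  have hinj : Set.InjOn g s := by
    intro x hx y hy hxy
    have h1 : B * (Matrix.of x)⁻¹ = B * (Matrix.of y)⁻¹ := φ.symm.injective hxy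
    have h2 : (Matrix.of x)⁻¹ = (Matrix.of y)⁻¹ := by
      have := congrArg (fun W => B⁻¹ * W) h1
      simpa [← Matrix.mul_assoc, Matrix.nonsing_inv_mul _ hB] using this
    have h3 : Matrix.of x = Matrix.of y := by
      have := congrArg (fun W : Matrix (Fin p) (Fin p) ℝ => W⁻¹) h2
      simpa [Matrix.nonsing_inv_nonsing_inv _ (isUnit_iff_ne_zero.mpr hx),
        Matrix.nonsing_inv_nonsing_inv _ (isUnit_iff_ne_zero.mpr hy)] using this
    exact Matrix.of.injective h3
  -- image
  have himg : g '' s = s := by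
    ext w
    constructor
    · rintro ⟨z, hz, rfl⟩
      have hzdet : IsUnit (Matrix.of z).det := isUnit_iff_ne_zero.mpr hz
      have : (Matrix.of (g z)) = B * (Matrix.of z)⁻¹ := by
        simp [hg, hφsymm_apply]
      simp only [hs, Set.mem_setOf_eq, this, Matrix.det_mul, Matrix.det_nonsing_inv,
        Ring.inverse_eq_inv]
      exact mul_ne_zero hB.ne_zero (inv_ne_zero hzdet.ne_zero)
    · intro hw
      refine ⟨Matrix.of.symm ((Matrix.of w)⁻¹ * B), ?_, ?_⟩
      · simp only [hs, Set.mem_setOf_eq]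
        simp only [Equiv.apply_symm_apply, Matrix.det_mul, Matrix.det_nonsing_inv,
          Ring.inverse_eq_inv]
        exact mul_ne_zero (inv_ne_zero hw) hB.ne_zero
      · have hwdet : IsUnit (Matrix.of w).det := isUnit_iff_ne_zero.mpr hw
        simp only [hg, hφsymm_apply, Equiv.apply_symm_apply]
        rw [Matrix.mul_inv_rev, Matrix.nonsing_inv_nonsing_inv _ hwdet, ← Matrix.mul_assoc,
          Matrix.mul_nonsing_inv _ hB, Matrix.one_mul]
        exact Matrix.of.symm_apply_apply w
  -- determinant of derivative
  have hdet : ∀ z ∈ s, ENNReal.ofReal |(g' z).det| =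
      ENNReal.ofReal (|(Matrix.of z).det| ^ (-(2 * p : ℝ)) * |B.det| ^ (p : ℕ)) := by
    intro z hz
    have hzdet : IsUnit (Matrix.of z).det := isUnit_iff_ne_zero.mpr hz
    congr 1
    have h1 : (g' z).det = LinearMap.det
        ((LinearMap.mulLeft ℝ (-(B * (Matrix.of z)⁻¹))).comp
          (LinearMap.mulRight ℝ (Matrix.of z)⁻¹)) := by
      rw [hg']
      rw [ContinuousLinearMap.det]
      have hcoe : (((φ.symm : Matrix (Fin p) (Fin p) ℝ →L[ℝ] (Fin p → Fin p → ℝ)).comp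
          ((LinearMap.toContinuousLinearMap
            ((LinearMap.mulLeft ℝ (-(B * (Matrix.of z)⁻¹))).comp
              (LinearMap.mulRight ℝ (Matrix.of z)⁻¹))).comp
            (φ : (Fin p → Fin p → ℝ) →L[ℝ] Matrix (Fin p) (Fin p) ℝ)) :
            (Fin p → Fin p → ℝ) →L[ℝ] (Fin p → Fin p → ℝ)) :
            (Fin p → Fin p → ℝ) →ₗ[ℝ] (Fin p → Fin p → ℝ)) =
          (le.symm : Matrix (Fin p) (Fin p) ℝ →ₗ[ℝ] (Fin p → Fin p → ℝ)) ∘ₗ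
            (((LinearMap.mulLeft ℝ (-(B * (Matrix.of z)⁻¹))).comp
              (LinearMap.mulRight ℝ (Matrix.of z)⁻¹)) ∘ₗ
              (le : (Fin p → Fin p → ℝ) →ₗ[ℝ] Matrix (Fin p) (Fin p) ℝ)) := by
        ext x
        simp [hφ]
      rw [hcoe]
      have := LinearMap.det_conj
        ((LinearMap.mulLeft ℝ (-(B * (Matrix.of z)⁻¹))).comp
          (LinearMap.mulRight ℝ (Matrix.of z)⁻¹)) le.symm
      rw [← this]
      congr 1
    rw [h1, det_mulLeft_comp_mulRight']
    have habs : |(Matrix.of z).det| ≠ 0 := abs_ne_zero.mpr hzdet.ne_zero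
    have hpos : (0:ℝ) < |(Matrix.of z).det| := abs_pos.mpr hzdet.ne_zero
    have hrpow : |(Matrix.of z).det| ^ (-(2 * p : ℝ)) =
        (|(Matrix.of z).det| ^ (2 * p : ℕ))⁻¹ := by
      rw [show (-(2 * p : ℝ)) = -((2 * p : ℕ) : ℝ) by push_cast; ring,
        Real.rpow_neg hpos.le, Real.rpow_natCast]
    rw [hrpow]
    rw [abs_mul, abs_pow, abs_pow, Matrix.det_neg, Matrix.det_mul,
      Matrix.det_nonsing_inv, Ring.inverse_eq_inv]
    rw [abs_mul, abs_pow, abs_neg, abs_one, one_pow, one_mul, abs_mul, abs_inv]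
    field_simp
    rw [div_pow, _root_.one_div_pow, two_mul, pow_add]
    field_simp
  -- putting everything together
  calc
    (∫⁻ a : Fin p → Fin p → ℝ, f ((Matrix.of a)⁻¹ * B) ∂volume)
        = ∫⁻ a in Set.univ, f ((Matrix.of a)⁻¹ * B) ∂volume := (setLIntegral_univ _).symm
    _ = ∫⁻ a in s, f ((Matrix.of a)⁻¹ * B) ∂volume := (setLIntegral_congr hs_ae).symm
    _ = ∫⁻ a in g '' s, f ((Matrix.of a)⁻¹ * B) ∂volume := by rw [himg]
    _ = ∫⁻ z in s, ENNReal.ofReal |(g' z).det| * f ((Matrix.of (g z))⁻¹ * B) ∂volume :=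
      lintegral_image_eq_lintegral_abs_det_fderiv_mul volume hs_meas hg'within hinj _
    _ = ∫⁻ z in s, f (Matrix.of z) *
          ENNReal.ofReal (|(Matrix.of z).det| ^ (-(2 * p : ℝ)) * |B.det| ^ (p : ℕ)) ∂volume := by
      apply setLIntegral_congr_fun hs_meas
      intro z hz
      have hzdet : IsUnit (Matrix.of z).det := isUnit_iff_ne_zero.mpr hz
      have hfix : (Matrix.of (g z))⁻¹ * B = Matrix.of z := by
        have hofg : (Matrix.of (g z)) = B * (Matrix.of z)⁻¹ := by
          simp [hg, hφsymm_apply]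
        rw [hofg, Matrix.mul_inv_rev, Matrix.nonsing_inv_nonsing_inv _ hzdet,
          Matrix.mul_assoc, Matrix.nonsing_inv_mul _ hB, Matrix.mul_one]
      beta_reduce
      rw [hfix, hdet z hz, mul_comm]
    _ = ∫⁻ z in Set.univ, f (Matrix.of z) *
          ENNReal.ofReal (|(Matrix.of z).det| ^ (-(2 * p : ℝ)) * |B.det| ^ (p : ℕ)) ∂volume :=
      setLIntegral_congr hs_ae
    _ = ∫⁻ z : Fin p → Fin p → ℝ, f (Matrix.of z) *
          ENNReal.ofReal (|(Matrix.of z).det| ^ (-(2 * p : ℝ)) * |B.det| ^ (p : ℕ)) ∂volume :=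
      setLIntegral_univ _
end
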